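/- For G = Spin_{4n} (so Z(G) ≅ ℤ₂ × ℤ₂), the action of the center on the level ℓ alcove of type D_{2n} has a fixed point only if ℓ is even. -/
import Mathlib


/-- For `G = Spin_{4n}` (center ℤ₂ × ℤ₂), the action of the center on the
level ℓ alcove of type `D_{2n}` — generated by
`A₁(μ) = (ℓ-μ₁, μ₂, …, μ_{2n-1}, -μ_{2n})`, `A_{2n}(μ) = (ℓ/2-μ_{2n}, …, ℓ/2-μ₁)` and
`A_{2n-1} = A₁ ∘ A_{2n}` — has a fixed point only if ℓ is even. -/
theorem spin4n_alcove_fixed_point_even (n : ℕ) (hn : 2 ≤ n) (ℓ : ℕ)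
    (μ : Fin (2 * n) → ℝ)
    -- μ has integer or half-integer coordinates
    (hint : (∀ i, ∃ z : ℤ, μ i = (z : ℝ)) ∨ (∀ i, ∃ z : ℤ, μ i = (z : ℝ) + 1 / 2))
    -- μ lies in the level ℓ alcove: μ₁ ≥ ⋯ ≥ μ_{2n-1} ≥ |μ_{2n}| and μ₁ + μ₂ ≤ ℓ
    (hmono : ∀ i j : Fin (2 * n), i ≤ j → j ≠ (⟨2 * n - 1, by omega⟩ : Fin (2 * n)) →
      μ j ≤ μ i)
    (habs : ∀ i : Fin (2 * n), i ≠ (⟨2 * n - 1, by omega⟩ : Fin (2 * n)) →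
      |μ (⟨2 * n - 1, by omega⟩ : Fin (2 * n))| ≤ μ i)
    (hsum : μ (⟨0, by omega⟩ : Fin (2 * n)) + μ (⟨1, by omega⟩ : Fin (2 * n)) ≤ (ℓ : ℝ))
    -- μ is fixed by A₁
    (hfix1 : (fun j : Fin (2 * n) =>
        if j = (⟨0, by omega⟩ : Fin (2 * n)) then (ℓ : ℝ) - μ j
        else if j = (⟨2 * n - 1, by omega⟩ : Fin (2 * n)) then -μ j
        else μ j) = μ)
    -- μ is fixed by A_{2n}
    (hfix2 : (fun j : Fin (2 * n) => (ℓ : ℝ) / 2 - μ (Fin.rev j)) = μ)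
    -- μ is fixed by A_{2n-1} = A₁ ∘ A_{2n}
    (hfix3 : (fun j : Fin (2 * n) =>
        if j = (⟨0, by omega⟩ : Fin (2 * n)) then
          (ℓ : ℝ) - ((ℓ : ℝ) / 2 - μ (Fin.rev j))
        else if j = (⟨2 * n - 1, by omega⟩ : Fin (2 * n)) then
          -((ℓ : ℝ) / 2 - μ (Fin.rev j))
        else (ℓ : ℝ) / 2 - μ (Fin.rev j)) = μ) :
    Even ℓ := by
  have h2n : 2 * n - 1 ≠ 0 := by omega
  have hne : (⟨2 * n - 1, by omega⟩ : Fin (2 * n)) ≠ ⟨0, by omega⟩ := by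
    simp [Fin.ext_iff]; omega
  have hlast := congrFun hfix1 ⟨2 * n - 1, by omega⟩
  simp [hne] at hlast
  have hlast0 : μ ⟨2 * n - 1, by omega⟩ = 0 := by linarith
  have h0 := congrFun hfix1 ⟨0, by omega⟩
  simp [hne.symm, (by simp [Fin.ext_iff]; omega : (⟨0, by omega⟩ : Fin (2 * n)) ≠ ⟨2 * n - 1, by omega⟩)] at h0
  rcases hint with h | h
  · obtain ⟨z, hz⟩ := h ⟨0, by omega⟩
    have : (ℓ : ℝ) = 2 * z := by rw [hz] at h0; linarith
    have : (ℓ : ℤ) = 2 * z := by exact_mod_cast this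
    exact ⟨z.toNat, by omega⟩
  · obtain ⟨z, hz⟩ := h ⟨2 * n - 1, by omega⟩
    rw [hlast0] at hz
    exfalso
    have : (2 * z : ℝ) = -1 := by linarith
    have : (2 * z : ℤ) = -1 := by exact_mod_cast this
    omega
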